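/- Let W = Gamma^T X̃ for a (p+1) x d real matrix Gamma. Suppose (i) Y is conditionally independent of sigma(X̃) given sigma(W) (the informative-surrogate dimension-reduction condition), and (ii) Y is conditionally independent of R given sigma(X̃) (missing at random). Then E[Y | sigma(W) ⊔ sigma(R)] = E[Y | sigma(W)] almost surely; consequently the conditional mean function g with g(W) = E[Y | X̃] a.s. also satisfies g(W) = E[Y | W, R = 1], so the low-dimensional imputation model restricted to the fully observed data coincides with the unrestricted one. -/

import Mathlib

open MeasureTheory ProbabilityTheory Matrix

/-- `X̃ = (Z, X) ∈ ℝ^{p+1}`, the surrogate stacked on top of the covariates. -/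
noncomputable def tilde {Ω : Type*} {p : ℕ} (Z : Ω → ℝ) (X : Ω → Fin p → ℝ) (ω : Ω) :
    Fin (p + 1) → ℝ := Fin.cons (Z ω) (X ω)

lemma measurable_tilde {Ω : Type*} [MeasurableSpace Ω] {p : ℕ} {Z : Ω → ℝ} {X : Ω → Fin p → ℝ}
    (hZ : Measurable Z) (hX : Measurable X) : Measurable (tilde Z X) := by
  unfold tilde
  refine measurable_pi_iff.2 fun i => ?_
  refine Fin.cases ?_ (fun j => ?_) i
  · simpa using hZ
  · simpa [Function.comp_def] using (measurable_pi_apply j).comp hX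

/-- `Γᵀ x` for a `(p+1) × d` matrix `Γ` and `x ∈ ℝ^{p+1}`. -/
noncomputable def matT {n d : ℕ} (Γ : Matrix (Fin n) (Fin d) ℝ) (x : Fin n → ℝ) : Fin d → ℝ :=
  fun j => ∑ i, Γ i j * x i

lemma measurable_matT {Ω : Type*} [MeasurableSpace Ω] {n d : ℕ} {f : Ω → Fin n → ℝ}
    (hf : Measurable f) (Γ : Matrix (Fin n) (Fin d) ℝ) :
    Measurable fun ω => matT Γ (f ω) := by
  refine measurable_pi_iff.2 fun j => ?_
  exact Finset.measurable_sum _ fun i _ => measurable_const.mul ((measurable_pi_apply i).comp hf)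

section AuxLemmas

variable {Ω : Type*}

lemma aux_sup_eq_generateFrom (m₁ m₂ : MeasurableSpace Ω) :
    m₁ ⊔ m₂ = MeasurableSpace.generateFrom
      {S : Set Ω | ∃ A B, MeasurableSet[m₁] A ∧ MeasurableSet[m₂] B ∧ S = A ∩ B} := by
  refine le_antisymm (sup_le ?_ ?_) (MeasurableSpace.generateFrom_le ?_)
  · intro s hs
    exact MeasurableSpace.measurableSet_generateFrom
      ⟨s, Set.univ, hs, MeasurableSet.univ, (Set.inter_univ s).symm⟩
  · intro s hs
    exact MeasurableSpace.measurableSet_generateFrom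
      ⟨Set.univ, s, MeasurableSet.univ, hs, (Set.univ_inter s).symm⟩
  · rintro S ⟨A, B, hA, hB, rfl⟩
    exact ((le_sup_left : m₁ ≤ m₁ ⊔ m₂) _ hA).inter ((le_sup_right : m₂ ≤ m₁ ⊔ m₂) _ hB)

lemma aux_isPiSystem (m₁ m₂ : MeasurableSpace Ω) :
    IsPiSystem {S : Set Ω | ∃ A B, MeasurableSet[m₁] A ∧ MeasurableSet[m₂] B ∧ S = A ∩ B} := by
  rintro S ⟨A, B, hA, hB, rfl⟩ T ⟨A', B', hA', hB', rfl⟩ -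
  exact ⟨A ∩ A', B ∩ B', hA.inter hA', hB.inter hB', by rw [Set.inter_inter_inter_comm]⟩

lemma aux_setIntegral_sup {m₁ m₂ : MeasurableSpace Ω} [mΩ : MeasurableSpace Ω]
    {μ : Measure Ω} [IsFiniteMeasure μ]
    (h₁ : m₁ ≤ mΩ) (h₂ : m₂ ≤ mΩ) {f h : Ω → ℝ}
    (hf : Integrable f μ) (hh : Integrable h μ)
    (hbasic : ∀ A B, MeasurableSet[m₁] A → MeasurableSet[m₂] B →
      ∫ x in A ∩ B, f x ∂μ = ∫ x in A ∩ B, h x ∂μ)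
    {S : Set Ω} (hS : MeasurableSet[m₁ ⊔ m₂] S) :
    ∫ x in S, f x ∂μ = ∫ x in S, h x ∂μ := by
  have hle : m₁ ⊔ m₂ ≤ mΩ := sup_le h₁ h₂
  have huniv : ∫ x, f x ∂μ = ∫ x, h x ∂μ := by
    have := hbasic Set.univ Set.univ MeasurableSet.univ MeasurableSet.univ
    simpa using this
  refine @MeasurableSpace.induction_on_inter Ω (m₁ ⊔ m₂)
    (fun S _ => ∫ x in S, f x ∂μ = ∫ x in S, h x ∂μ) _
    (aux_sup_eq_generateFrom m₁ m₂) (aux_isPiSystem m₁ m₂) (by simp) ?_ ?_ ?_ S hS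
  · rintro T ⟨A, B, hA, hB, rfl⟩
    exact hbasic A B hA hB
  · intro t ht hC
    have htm : MeasurableSet t := hle _ ht
    have h1 := integral_add_compl htm hf
    have h2 := integral_add_compl htm hh
    linarith
  · intro s hd hm hC
    rw [integral_iUnion (fun i => hle _ (hm i)) hd hf.integrableOn,
      integral_iUnion (fun i => hle _ (hm i)) hd hh.integrableOn]
    exact tsum_congr hC

lemma aux_pullout {m : MeasurableSpace Ω} [mΩ : MeasurableSpace Ω] {μ : Measure Ω}
    (hm : m ≤ mΩ) [SigmaFinite (μ.trim hm)] {f q : Ω → ℝ}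
    (hf : StronglyMeasurable[m] f) (hfq : Integrable (fun x => f x * q x) μ)
    (hq : Integrable q μ) :
    ∫ x, f x * q x ∂μ = ∫ x, f x * (μ[q|m]) x ∂μ := by
  have h1 : μ[(f * q : Ω → ℝ)|m] =ᵐ[μ] f * μ[q|m] :=
    condExp_mul_of_stronglyMeasurable_left hf (by exact hfq) hq
  calc ∫ x, f x * q x ∂μ = ∫ x, (f * q) x ∂μ := rfl
    _ = ∫ x, (μ[(f * q : Ω → ℝ)|m]) x ∂μ := (integral_condExp hm).symm
    _ = ∫ x, (f * μ[q|m]) x ∂μ := integral_congr_ae h1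
    _ = ∫ x, f x * (μ[q|m]) x ∂μ := rfl

lemma aux_ind_mul_right [mΩ : MeasurableSpace Ω] {μ : Measure Ω} {S : Set Ω}
    (hS : MeasurableSet S) {q : Ω → ℝ} (hq : Integrable q μ) :
    Integrable (fun x => q x * S.indicator (fun _ => (1 : ℝ)) x) μ := by
  have : (fun x => q x * S.indicator (fun _ => (1 : ℝ)) x) = S.indicator q := by
    funext x; by_cases hx : x ∈ S <;> simp [hx]
  rw [this]; exact hq.indicator hS

lemma aux_ind_mul_left [mΩ : MeasurableSpace Ω] {μ : Measure Ω} {S : Set Ω}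
    (hS : MeasurableSet S) {q : Ω → ℝ} (hq : Integrable q μ) :
    Integrable (fun x => S.indicator (fun _ => (1 : ℝ)) x * q x) μ := by
  have : (fun x => S.indicator (fun _ => (1 : ℝ)) x * q x) = S.indicator q := by
    funext x; by_cases hx : x ∈ S <;> simp [hx]
  rw [this]; exact hq.indicator hS

lemma aux_setIntegral_inter [mΩ : MeasurableSpace Ω] {μ : Measure Ω} {A B : Set Ω}
    (hA : MeasurableSet A) (hB : MeasurableSet B) (q : Ω → ℝ) :
    ∫ x in A ∩ B, q x ∂μ
      = ∫ x, (A.indicator (fun _ => (1 : ℝ)) x * q x) * B.indicator (fun _ => (1 : ℝ)) x ∂μ := by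
  rw [← integral_indicator (hA.inter hB)]
  congr 1
  funext x
  by_cases h1 : x ∈ A <;> by_cases h2 : x ∈ B <;> simp [Set.indicator_apply, h1, h2]

/-- If `Y` and `g` are conditionally independent given `m'`, then conditioning on
`m' ⊔ σ(g)` is the same as conditioning on `m'`. -/
lemma condexp_sup_comap_of_condIndepFun {γ : Type*} {m' : MeasurableSpace Ω}
    [mΩ : MeasurableSpace Ω] [StandardBorelSpace Ω] {μ : Measure Ω} [IsProbabilityMeasure μ]
    {hm' : m' ≤ mΩ} {mγ : MeasurableSpace γ}
    {Y : Ω → ℝ} {g : Ω → γ} (hY : Measurable Y) (hg : Measurable g)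
    (hYint : Integrable Y μ) (hCI : CondIndepFun m' hm' Y g μ) :
    μ[Y | m' ⊔ MeasurableSpace.comap g mγ] =ᵐ[μ] μ[Y | m'] := by
  have hm₁ : MeasurableSpace.comap Y inferInstance ≤ mΩ := hY.comap_le
  have hm₂ : MeasurableSpace.comap g mγ ≤ mΩ := hg.comap_le
  have hn : m' ⊔ MeasurableSpace.comap Y inferInstance ≤ mΩ := sup_le hm' hm₁
  have hsup : m' ⊔ MeasurableSpace.comap g mγ ≤ mΩ := sup_le hm' hm₂
  have prodRule := (condIndepFun_iff_condExp_inter_preimage_eq_mul hY hg).mp hCI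
  -- bound on conditional probabilities
  have hbd : ∀ B : Set Ω, MeasurableSet B → ∀ᵐ x ∂μ, ‖(μ⟦B|m'⟧) x‖ ≤ 1 := by
    intro B hB
    have h0 : (0 : Ω → ℝ) ≤ᵐ[μ] μ⟦B|m'⟧ :=
      condExp_nonneg (Filter.Eventually.of_forall fun x =>
        Set.indicator_nonneg (fun _ _ => zero_le_one) x)
    have h1 : μ⟦B|m'⟧ ≤ᵐ[μ] μ[(fun _ => (1 : ℝ))|m'] :=
      condExp_mono ((integrable_const (1 : ℝ)).indicator hB) (integrable_const (1 : ℝ))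
        (Filter.Eventually.of_forall fun x => by by_cases hx : x ∈ B <;> simp [hx])
    rw [condExp_const hm'] at h1
    filter_upwards [h0, h1] with x hx0 hx1
    rw [Real.norm_eq_abs, abs_le]
    exact ⟨by simpa using le_trans (by norm_num) hx0, hx1⟩
  -- Step 1: E[1_B | m' ⊔ σ(Y)] = E[1_B | m'] for B = g⁻¹' t.
  have step1 : ∀ t : Set γ, MeasurableSet t →
      μ⟦g ⁻¹' t | m' ⊔ MeasurableSpace.comap Y inferInstance⟧ =ᵐ[μ] μ⟦g ⁻¹' t | m'⟧ := by
    intro t ht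
    have hBm : MeasurableSet (g ⁻¹' t) := hg ht
    have key : ∀ S : Set Ω, MeasurableSet[m' ⊔ MeasurableSpace.comap Y inferInstance] S →
        ∫ x in S, (μ⟦g ⁻¹' t|m'⟧) x ∂μ
          = ∫ x in S, (g ⁻¹' t).indicator (fun _ => (1 : ℝ)) x ∂μ := by
      intro S hS
      refine aux_setIntegral_sup hm' hm₁ integrable_condExp
        ((integrable_const 1).indicator hBm) ?_ hS
      rintro A s hA ⟨u, hu, rfl⟩
      have hAm : MeasurableSet A := hm' _ hA
      have hsm : MeasurableSet (Y ⁻¹' u) := hY hu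
      have e1 : ∫ x in A ∩ Y ⁻¹' u, (μ⟦g ⁻¹' t|m'⟧) x ∂μ
          = ∫ x, A.indicator (fun _ => (1 : ℝ)) x * ((Y ⁻¹' u ∩ g ⁻¹' t).indicator
              (fun _ => (1 : ℝ))) x ∂μ := by
        calc ∫ x in A ∩ Y ⁻¹' u, (μ⟦g ⁻¹' t|m'⟧) x ∂μ
            = ∫ x, (A.indicator (fun _ => (1 : ℝ)) x * (μ⟦g ⁻¹' t|m'⟧) x)
                * (Y ⁻¹' u).indicator (fun _ => (1 : ℝ)) x ∂μ :=
              aux_setIntegral_inter hAm hsm _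
          _ = ∫ x, (A.indicator (fun _ => (1 : ℝ)) x * (μ⟦g ⁻¹' t|m'⟧) x)
                * (μ⟦Y ⁻¹' u|m'⟧) x ∂μ :=
              aux_pullout hm' ((stronglyMeasurable_const.indicator hA).mul
                  stronglyMeasurable_condExp)
                (aux_ind_mul_right hsm (aux_ind_mul_left hAm integrable_condExp))
                ((integrable_const 1).indicator hsm)
          _ = ∫ x, A.indicator (fun _ => (1 : ℝ)) x
                * ((μ⟦Y ⁻¹' u|m'⟧) x * (μ⟦g ⁻¹' t|m'⟧) x) ∂μ :=
              integral_congr_ae (Filter.Eventually.of_forall fun x => by ring)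
          _ = ∫ x, A.indicator (fun _ => (1 : ℝ)) x * (μ⟦Y ⁻¹' u ∩ g ⁻¹' t|m'⟧) x ∂μ := by
              refine integral_congr_ae ?_
              filter_upwards [prodRule u t hu ht] with x hx
              rw [hx]
          _ = ∫ x, A.indicator (fun _ => (1 : ℝ)) x * ((Y ⁻¹' u ∩ g ⁻¹' t).indicator
                (fun _ => (1 : ℝ))) x ∂μ :=
              (aux_pullout hm' (stronglyMeasurable_const.indicator hA)
                (aux_ind_mul_left hAm ((integrable_const 1).indicator (hsm.inter hBm)))
                ((integrable_const 1).indicator (hsm.inter hBm))).symm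
      have e2 : ∫ x in A ∩ Y ⁻¹' u, (g ⁻¹' t).indicator (fun _ => (1 : ℝ)) x ∂μ
          = ∫ x, (A.indicator (fun _ => (1 : ℝ)) x
              * (g ⁻¹' t).indicator (fun _ => (1 : ℝ)) x)
              * (Y ⁻¹' u).indicator (fun _ => (1 : ℝ)) x ∂μ :=
        aux_setIntegral_inter hAm hsm _
      rw [e1, e2]
      refine integral_congr_ae (Filter.Eventually.of_forall fun x => ?_)
      by_cases h1 : x ∈ A <;> by_cases h2 : x ∈ Y ⁻¹' u <;> by_cases h3 : x ∈ g ⁻¹' t <;>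
        simp [Set.indicator_apply, h1, h2, h3]
    exact (ae_eq_condExp_of_forall_setIntegral_eq hn
      ((integrable_const (1 : ℝ)).indicator hBm)
      (fun s _ _ => integrable_condExp.integrableOn)
      (fun s hs _ => key s hs)
      ((stronglyMeasurable_condExp (m := m') (μ := μ)
        (f := (g ⁻¹' t).indicator (fun _ => (1 : ℝ)))).mono
          (le_sup_left : m' ≤ m' ⊔ MeasurableSpace.comap Y inferInstance)).aestronglyMeasurable (μ := μ)).symm
  -- Step 2
  have hgeq : ∀ S : Set Ω, MeasurableSet[m' ⊔ MeasurableSpace.comap g mγ] S →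
      ∫ x in S, (μ[Y|m']) x ∂μ = ∫ x in S, Y x ∂μ := by
    intro S hS
    refine aux_setIntegral_sup hm' hm₂ integrable_condExp hYint ?_ hS
    rintro A B hA ⟨t, ht, rfl⟩
    have hAm : MeasurableSet A := hm' _ hA
    have hBm : MeasurableSet (g ⁻¹' t) := hg ht
    have hYm₁ : Measurable[MeasurableSpace.comap Y inferInstance] Y := fun u hu => ⟨u, hu, rfl⟩
    have hwSM : StronglyMeasurable[m'] (fun x =>
        A.indicator (fun _ => (1 : ℝ)) x * (μ⟦g ⁻¹' t|m'⟧) x) :=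
      (stronglyMeasurable_const.indicator hA).mul stronglyMeasurable_condExp
    have hwbd : ∀ᵐ x ∂μ, ‖A.indicator (fun _ => (1 : ℝ)) x * (μ⟦g ⁻¹' t|m'⟧) x‖ ≤ 1 := by
      filter_upwards [hbd (g ⁻¹' t) hBm] with x hx
      rw [norm_mul]
      have h1 : ‖A.indicator (fun _ => (1 : ℝ)) x‖ ≤ 1 := by
        by_cases hxA : x ∈ A <;> simp [hxA]
      calc ‖A.indicator (fun _ => (1 : ℝ)) x‖ * ‖(μ⟦g ⁻¹' t|m'⟧) x‖ ≤ 1 * 1 :=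
            mul_le_mul h1 hx (norm_nonneg _) zero_le_one
        _ = 1 := one_mul 1
    have eb : ∫ x in A ∩ g ⁻¹' t, (μ[Y|m']) x ∂μ
        = ∫ x, (A.indicator (fun _ => (1 : ℝ)) x * (μ⟦g ⁻¹' t|m'⟧) x) * (μ[Y|m']) x ∂μ := by
      calc ∫ x in A ∩ g ⁻¹' t, (μ[Y|m']) x ∂μ
          = ∫ x, (A.indicator (fun _ => (1 : ℝ)) x * (μ[Y|m']) x)
              * (g ⁻¹' t).indicator (fun _ => (1 : ℝ)) x ∂μ :=
            aux_setIntegral_inter hAm hBm _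
        _ = ∫ x, (A.indicator (fun _ => (1 : ℝ)) x * (μ[Y|m']) x) * (μ⟦g ⁻¹' t|m'⟧) x ∂μ :=
            aux_pullout hm' ((stronglyMeasurable_const.indicator hA).mul
                stronglyMeasurable_condExp)
              (aux_ind_mul_right hBm (aux_ind_mul_left hAm integrable_condExp))
              ((integrable_const 1).indicator hBm)
        _ = ∫ x, (A.indicator (fun _ => (1 : ℝ)) x * (μ⟦g ⁻¹' t|m'⟧) x) * (μ[Y|m']) x ∂μ :=
            integral_congr_ae (Filter.Eventually.of_forall fun x => by ring)
    have ea : ∫ x in A ∩ g ⁻¹' t, Y x ∂μ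
        = ∫ x, (A.indicator (fun _ => (1 : ℝ)) x * (μ⟦g ⁻¹' t|m'⟧) x) * (μ[Y|m']) x ∂μ := by
      calc ∫ x in A ∩ g ⁻¹' t, Y x ∂μ
          = ∫ x, (A.indicator (fun _ => (1 : ℝ)) x * Y x)
              * (g ⁻¹' t).indicator (fun _ => (1 : ℝ)) x ∂μ :=
            aux_setIntegral_inter hAm hBm _
        _ = ∫ x, (A.indicator (fun _ => (1 : ℝ)) x * Y x) * (μ⟦g ⁻¹' t|m' ⊔ MeasurableSpace.comap Y inferInstance⟧) x ∂μ :=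
            aux_pullout hn
              (((stronglyMeasurable_const.indicator hA).mono le_sup_left).mul
                (hYm₁.stronglyMeasurable.mono le_sup_right))
              (aux_ind_mul_right hBm (aux_ind_mul_left hAm hYint))
              ((integrable_const 1).indicator hBm)
        _ = ∫ x, (A.indicator (fun _ => (1 : ℝ)) x * Y x) * (μ⟦g ⁻¹' t|m'⟧) x ∂μ := by
            refine integral_congr_ae ?_
            filter_upwards [step1 t ht] with x hx
            rw [hx]
        _ = ∫ x, (A.indicator (fun _ => (1 : ℝ)) x * (μ⟦g ⁻¹' t|m'⟧) x) * Y x ∂μ :=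
            integral_congr_ae (Filter.Eventually.of_forall fun x => by ring)
        _ = ∫ x, (A.indicator (fun _ => (1 : ℝ)) x * (μ⟦g ⁻¹' t|m'⟧) x) * (μ[Y|m']) x ∂μ :=
            aux_pullout hm' hwSM
              (hYint.bdd_mul ((hwSM.mono hm').aestronglyMeasurable) hwbd) hYint
    rw [ea, eb]
  exact (ae_eq_condExp_of_forall_setIntegral_eq hsup hYint
    (fun s _ _ => integrable_condExp.integrableOn)
    (fun s hs _ => hgeq s hs)
    ((stronglyMeasurable_condExp (m := m') (μ := μ) (f := Y)).mono
      (le_sup_left : m' ≤ m' ⊔ MeasurableSpace.comap g mγ)).aestronglyMeasurable (μ := μ)).symm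

end AuxLemmas


/-- Let `W = Γᵀ X̃`.  If (i) `Y ⟂ σ(X̃) ∣ σ(W)` (informative-surrogate dimension
reduction) and (ii) `Y ⟂ R ∣ σ(X̃)` (missing at random), then
`E[Y ∣ σ(W) ⊔ σ(R)] = E[Y ∣ σ(W)]` a.s.; consequently any measurable `g` with
`g(W) = E[Y ∣ X̃]` a.s. also satisfies `g(W) = E[Y ∣ W, R = 1]`, i.e. the low-dimensional
imputation model restricted to the fully observed data coincides with the unrestricted one. -/
theorem condexp_dimension_reduction_missing
    {Ω : Type*} [MeasurableSpace Ω] [StandardBorelSpace Ω] {P : Measure Ω}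
    [IsProbabilityMeasure P] {p d : ℕ}
    (X : Ω → Fin p → ℝ) (Z Y R : Ω → ℝ)
    (hX : Measurable X) (hZ : Measurable Z) (hY : Measurable Y) (hR : Measurable R)
    (hXbd : ∃ C, ∀ ω i, |X ω i| ≤ C) (hZbd : ∃ C, ∀ ω, |Z ω| ≤ C)
    (hYint : Integrable Y P)
    (hR01 : ∀ ω, R ω = 0 ∨ R ω = 1)
    (Γ : Matrix (Fin (p + 1)) (Fin d) ℝ)
    -- (i) `Y ⟂ σ(X̃) ∣ σ(W)` where `W = Γᵀ X̃`
    (hDR : CondIndepFun (MeasurableSpace.comap (fun ω => matT Γ (tilde Z X ω)) inferInstance)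
      (measurable_matT (measurable_tilde hZ hX) Γ).comap_le Y (tilde Z X) P)
    -- (ii) `Y ⟂ R ∣ σ(X̃)` (missing at random)
    (hMAR : CondIndepFun (MeasurableSpace.comap (tilde Z X) inferInstance)
      (measurable_tilde hZ hX).comap_le Y R P) :
    P[Y | MeasurableSpace.comap (fun ω => matT Γ (tilde Z X ω)) inferInstance
          ⊔ MeasurableSpace.comap R inferInstance]
        =ᵐ[P] P[Y | MeasurableSpace.comap (fun ω => matT Γ (tilde Z X ω)) inferInstance] ∧
      ∀ g : (Fin d → ℝ) → ℝ, Measurable g →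
        ((fun ω => g (matT Γ (tilde Z X ω)))
            =ᵐ[P] P[Y | MeasurableSpace.comap (tilde Z X) inferInstance]) →
        (fun ω => g (matT Γ (tilde Z X ω)))
            =ᵐ[P[|{ω | R ω = 1}]]
              (P[|{ω | R ω = 1}])[Y |
                MeasurableSpace.comap (fun ω => matT Γ (tilde Z X ω)) inferInstance] := by
  have hW : Measurable fun ω => matT Γ (tilde Z X ω) :=
    measurable_matT (measurable_tilde hZ hX) Γ
  have hXt : Measurable (tilde Z X) := measurable_tilde hZ hX
  have hleW : MeasurableSpace.comap (fun ω => matT Γ (tilde Z X ω)) inferInstance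
      ≤ ‹MeasurableSpace Ω› := hW.comap_le
  have hleX : MeasurableSpace.comap (tilde Z X) inferInstance ≤ ‹MeasurableSpace Ω› :=
    hXt.comap_le
  have hleR : MeasurableSpace.comap R inferInstance ≤ ‹MeasurableSpace Ω› := hR.comap_le
  have hleWR : MeasurableSpace.comap (fun ω => matT Γ (tilde Z X ω)) inferInstance
      ⊔ MeasurableSpace.comap R inferInstance ≤ ‹MeasurableSpace Ω› := sup_le hleW hleR
  have hWX : MeasurableSpace.comap (fun ω => matT Γ (tilde Z X ω)) inferInstance
      ≤ MeasurableSpace.comap (tilde Z X) inferInstance := by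
    rw [show (fun ω => matT Γ (tilde Z X ω)) = (fun x => matT Γ x) ∘ (tilde Z X) from rfl,
      ← MeasurableSpace.comap_comp]
    exact MeasurableSpace.comap_mono (measurable_matT measurable_id Γ).comap_le
  -- (A): E[Y | X̃] = E[Y | W]
  have eqA : P[Y | MeasurableSpace.comap (tilde Z X) inferInstance]
      =ᵐ[P] P[Y | MeasurableSpace.comap (fun ω => matT Γ (tilde Z X ω)) inferInstance] := by
    have h := condexp_sup_comap_of_condIndepFun hY hXt hYint hDR
    rwa [sup_eq_right.mpr hWX] at h
  -- (B): E[Y | X̃ ⊔ R] = E[Y | X̃]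
  have eqB : P[Y | MeasurableSpace.comap (tilde Z X) inferInstance
        ⊔ MeasurableSpace.comap R inferInstance]
      =ᵐ[P] P[Y | MeasurableSpace.comap (tilde Z X) inferInstance] :=
    condexp_sup_comap_of_condIndepFun hY hR hYint hMAR
  -- Goal 1
  have goal1 : P[Y | MeasurableSpace.comap (fun ω => matT Γ (tilde Z X ω)) inferInstance
        ⊔ MeasurableSpace.comap R inferInstance]
      =ᵐ[P] P[Y | MeasurableSpace.comap (fun ω => matT Γ (tilde Z X ω)) inferInstance] := by
    have hle1 : MeasurableSpace.comap (fun ω => matT Γ (tilde Z X ω)) inferInstance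
        ⊔ MeasurableSpace.comap R inferInstance
        ≤ MeasurableSpace.comap (tilde Z X) inferInstance
          ⊔ MeasurableSpace.comap R inferInstance := sup_le_sup_right hWX _
    have hle2 : MeasurableSpace.comap (tilde Z X) inferInstance
        ⊔ MeasurableSpace.comap R inferInstance ≤ ‹MeasurableSpace Ω› := sup_le hleX hleR
    have t1 := condExp_condExp_of_le (μ := P) (f := Y) hle1 hle2
    have t2 : P[P[Y | MeasurableSpace.comap (tilde Z X) inferInstance
          ⊔ MeasurableSpace.comap R inferInstance] |
          MeasurableSpace.comap (fun ω => matT Γ (tilde Z X ω)) inferInstance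
          ⊔ MeasurableSpace.comap R inferInstance]
        =ᵐ[P] P[P[Y | MeasurableSpace.comap (fun ω => matT Γ (tilde Z X ω)) inferInstance] |
          MeasurableSpace.comap (fun ω => matT Γ (tilde Z X ω)) inferInstance
          ⊔ MeasurableSpace.comap R inferInstance] :=
      condExp_congr_ae (eqB.trans eqA)
    have t3 : P[P[Y | MeasurableSpace.comap (fun ω => matT Γ (tilde Z X ω)) inferInstance] |
          MeasurableSpace.comap (fun ω => matT Γ (tilde Z X ω)) inferInstance
          ⊔ MeasurableSpace.comap R inferInstance]
        = P[Y | MeasurableSpace.comap (fun ω => matT Γ (tilde Z X ω)) inferInstance] :=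
      condExp_of_stronglyMeasurable hleWR
        (stronglyMeasurable_condExp.mono le_sup_left) integrable_condExp
    rw [t3] at t2
    exact t1.symm.trans t2
  refine ⟨goal1, ?_⟩
  intro g hgm hg
  have hE : MeasurableSet {ω | R ω = 1} := hR (measurableSet_singleton 1)
  by_cases hc : P {ω | R ω = 1} = 0
  · have hzero : P[|{ω | R ω = 1}] = 0 := by
      rw [ProbabilityTheory.cond, Measure.restrict_eq_zero.mpr hc, smul_zero]
    rw [hzero]
    simp [Filter.EventuallyEq, MeasureTheory.ae_zero]
  · haveI : IsProbabilityMeasure (P[|{ω | R ω = 1}]) :=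
      ProbabilityTheory.cond_isProbabilityMeasure hc
    have hgP : Integrable (fun ω => g (matT Γ (tilde Z X ω))) P :=
      integrable_condExp.congr hg.symm
    have hcond_eq : P[|{ω | R ω = 1}]
        = (P {ω | R ω = 1})⁻¹ • P.restrict {ω | R ω = 1} := rfl
    have hinv : (P {ω | R ω = 1})⁻¹ ≠ ⊤ := ENNReal.inv_ne_top.mpr hc
    have hYν : Integrable Y (P[|{ω | R ω = 1}]) := by
      rw [hcond_eq]; exact (hYint.integrableOn).smul_measure hinv
    have hgν : Integrable (fun ω => g (matT Γ (tilde Z X ω))) (P[|{ω | R ω = 1}]) := by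
      rw [hcond_eq]; exact (hgP.integrableOn).smul_measure hinv
    have hgW_sm : StronglyMeasurable[MeasurableSpace.comap
        (fun ω => matT Γ (tilde Z X ω)) inferInstance] (fun ω => g (matT Γ (tilde Z X ω))) :=
      Measurable.stronglyMeasurable (fun t ht => ⟨g ⁻¹' t, hgm ht, rfl⟩)
    have hEmem : MeasurableSet[MeasurableSpace.comap R inferInstance] {ω | R ω = 1} :=
      ⟨{1}, measurableSet_singleton 1, rfl⟩
    have hae : (fun ω => g (matT Γ (tilde Z X ω)))
        =ᵐ[P] P[Y | MeasurableSpace.comap (fun ω => matT Γ (tilde Z X ω)) inferInstance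
          ⊔ MeasurableSpace.comap R inferInstance] :=
      hg.trans (eqA.trans goal1.symm)
    refine ae_eq_condExp_of_forall_setIntegral_eq hleW hYν
      (fun s _ _ => hgν.integrableOn) ?_ hgW_sm.aestronglyMeasurable
    intro s hs _
    have hsm : MeasurableSet s := hleW _ hs
    have hrw : ∀ f : Ω → ℝ, ∫ x in s, f x ∂(P[|{ω | R ω = 1}])
        = (P {ω | R ω = 1})⁻¹.toReal • ∫ x in s ∩ {ω | R ω = 1}, f x ∂P := by
      intro f
      rw [hcond_eq, Measure.restrict_smul, integral_smul_measure,
        Measure.restrict_restrict hsm]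
    rw [hrw, hrw]
    have hsE : MeasurableSet[MeasurableSpace.comap (fun ω => matT Γ (tilde Z X ω)) inferInstance
        ⊔ MeasurableSpace.comap R inferInstance] (s ∩ {ω | R ω = 1}) :=
      MeasurableSet.inter
        ((le_sup_left : MeasurableSpace.comap (fun ω => matT Γ (tilde Z X ω)) inferInstance
          ≤ MeasurableSpace.comap (fun ω => matT Γ (tilde Z X ω)) inferInstance
            ⊔ MeasurableSpace.comap R inferInstance) _ hs)
        ((le_sup_right : MeasurableSpace.comap R inferInstance
          ≤ MeasurableSpace.comap (fun ω => matT Γ (tilde Z X ω)) inferInstance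
            ⊔ MeasurableSpace.comap R inferInstance) _ hEmem)
    congr 1
    calc ∫ x in s ∩ {ω | R ω = 1}, g (matT Γ (tilde Z X x)) ∂P
        = ∫ x in s ∩ {ω | R ω = 1},
            (P[Y | MeasurableSpace.comap (fun ω => matT Γ (tilde Z X ω)) inferInstance
              ⊔ MeasurableSpace.comap R inferInstance]) x ∂P :=
          integral_congr_ae (ae_restrict_of_ae hae)
      _ = ∫ x in s ∩ {ω | R ω = 1}, Y x ∂P := setIntegral_condExp hleWR hYint hsE
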